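/- Let b ≥ 2 be an integer. Let S_1 be the b×b lower-triangular complex matrix all of whose entries on or below the diagonal equal 1, let M_1 be the b×b matrix with 1's on the diagonal, -1's on the subdiagonal, and 0 elsewhere, let T_1 = M_1ᵀ, and set U_1 = S_1 T_1 and V_1 = T_1 S_1. Then the set of eigenvalues of U_1 and the set of eigenvalues of V_1 are both equal to the set of complex roots of the polynomial equation -1 + r - r² + ⋯ + (-1)^{b+1} r^b = 0. -/
import Mathlib


open Matrix

/-- The matrix `S_1`: the `b×b` lower-triangular complex matrix all of whose entries on or
below the diagonal equal `1`. -/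
def S1 (b : ℕ) : Matrix (Fin b) (Fin b) ℂ :=
  Matrix.of fun j k => if (k : ℕ) ≤ (j : ℕ) then 1 else 0

/-- The matrix `M_1`: the `b×b` matrix with `1`'s on the diagonal, `-1`'s on the subdiagonal,
and `0` elsewhere. -/
def M1 (b : ℕ) : Matrix (Fin b) (Fin b) ℂ :=
  Matrix.of fun j k =>
    if (j : ℕ) = (k : ℕ) then 1 else if (j : ℕ) = (k : ℕ) + 1 then -1 else 0

namespace EigAux

variable {b : ℕ}

/-- extend a `Fin b` vector by zero -/
def ve (b : ℕ) (v : Fin b → ℂ) (n : ℕ) : ℂ := if h : n < b then v ⟨n, h⟩ else 0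

@[simp] lemma ve_coe (v : Fin b → ℂ) (k : Fin b) : ve b v k = v k := by
  simp [ve, k.isLt]

lemma T1_mulVec (v : Fin b → ℂ) (i : Fin b) :
    ((M1 b)ᵀ *ᵥ v) i = ve b v i - ve b v ((i : ℕ) + 1) := by
  have hterm : ∀ k : Fin b, (M1 b)ᵀ i k * v k
      = (if k = i then v k else 0) + (if ((k : ℕ) : ℕ) = (i : ℕ) + 1 then -v k else 0) := by
    intro k
    simp only [transpose_apply, M1, of_apply]
    rcases eq_or_ne (k : ℕ) (i : ℕ) with h | h
    · have hk : k = i := Fin.ext h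
      subst hk
      simp
    · rcases eq_or_ne (k : ℕ) ((i : ℕ) + 1) with h2 | h2
      · simp [h, h2, Fin.ext_iff]
      · simp [h, h2, Fin.ext_iff]
  rw [mulVec, dotProduct]
  simp_rw [hterm]
  rw [Finset.sum_add_distrib, Finset.sum_ite_eq' Finset.univ i v]
  simp only [Finset.mem_univ, if_true]
  rw [ve_coe]
  have h2 : (∑ k : Fin b, if ((k : ℕ) : ℕ) = (i : ℕ) + 1 then -v k else 0)
      = -(ve b v ((i : ℕ) + 1)) := by
    by_cases h : (i : ℕ) + 1 < b
    · have : ∀ k : Fin b, ((k : ℕ) = (i : ℕ) + 1) ↔ k = (⟨(i : ℕ) + 1, h⟩ : Fin b) := by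
        intro k; simp [Fin.ext_iff]
      simp_rw [this]
      rw [Finset.sum_ite_eq' Finset.univ (⟨(i : ℕ) + 1, h⟩ : Fin b) (fun k => -v k)]
      simp [ve, h]
    · have : ∀ k : Fin b, ((k : ℕ) = (i : ℕ) + 1) = False := by
        intro k
        simp only [eq_iff_iff, iff_false]
        intro hk
        exact h (hk ▸ k.isLt)
      simp_rw [this]
      simp [ve, h]
  rw [h2]; ring

lemma S1_mulVec (w : Fin b → ℂ) (j : Fin b) :
    (S1 b *ᵥ w) j = ∑ n ∈ Finset.range ((j : ℕ) + 1), ve b w n := by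
  rw [mulVec, dotProduct]
  have hterm : ∀ k : Fin b, S1 b j k * w k
      = (fun n => if n ≤ (j : ℕ) then ve b w n else 0) (k : ℕ) := by
    intro k
    simp only [S1, of_apply, ve_coe]
    by_cases h : (k : ℕ) ≤ (j : ℕ) <;> simp [h, ve, k.isLt]
  simp_rw [hterm]
  rw [Fin.sum_univ_eq_sum_range (fun n => if n ≤ (j : ℕ) then ve b w n else 0) b]
  rw [← Finset.sum_subset (Finset.range_subset_range.2 j.isLt)]
  · apply Finset.sum_congr rfl
    intro n hn
    rw [if_pos (Nat.lt_succ_iff.1 (Finset.mem_range.1 hn))]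
  · intro n _ hn
    rw [if_neg (fun hle => hn (Finset.mem_range.2 (Nat.lt_succ_of_le hle)))]

lemma U1_mulVec (hb : 0 < b) (v : Fin b → ℂ) (j : Fin b) :
    ((S1 b * (M1 b)ᵀ) *ᵥ v) j = v ⟨0, hb⟩ - ve b v ((j : ℕ) + 1) := by
  rw [← mulVec_mulVec, S1_mulVec]
  have : ∀ n ∈ Finset.range ((j : ℕ) + 1), ve b ((M1 b)ᵀ *ᵥ v) n
      = ve b v n - ve b v (n + 1) := by
    intro n hn
    have hnb : n < b := lt_of_le_of_lt (Nat.lt_succ_iff.1 (Finset.mem_range.1 hn)) j.isLt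
    rw [show ve b ((M1 b)ᵀ *ᵥ v) n = ((M1 b)ᵀ *ᵥ v) ⟨n, hnb⟩ by simp [ve, hnb]]
    exact T1_mulVec v ⟨n, hnb⟩
  rw [Finset.sum_congr rfl this, Finset.sum_range_sub' (fun n => ve b v n)]
  congr 1
  simp [ve, hb]

lemma V1_mulVec (v : Fin b → ℂ) (i : Fin b) :
    (((M1 b)ᵀ * S1 b) *ᵥ v) i =
      if h : (i : ℕ) + 1 < b then -(v ⟨(i : ℕ) + 1, h⟩)
      else ∑ n ∈ Finset.range b, ve b v n := by
  rw [← mulVec_mulVec, T1_mulVec]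
  by_cases h : (i : ℕ) + 1 < b
  · rw [dif_pos h]
    rw [show ve b (S1 b *ᵥ v) (i : ℕ) = (S1 b *ᵥ v) i by
      simpa using (ve_coe (S1 b *ᵥ v) i)]
    rw [show ve b (S1 b *ᵥ v) ((i : ℕ) + 1) = (S1 b *ᵥ v) ⟨(i : ℕ) + 1, h⟩ by
      simp [ve, h]]
    rw [S1_mulVec, S1_mulVec]
    rw [Finset.sum_range_succ (fun n => ve b v n) ((i : ℕ) + 1)]
    have hv : ve b v ((i:ℕ)+1) = v ⟨(i:ℕ)+1, h⟩ := by simp [ve, h]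
    rw [hv]
    ring
  · rw [dif_neg h]
    have hib : (i : ℕ) + 1 = b := le_antisymm i.isLt (not_lt.1 h)
    rw [show ve b (S1 b *ᵥ v) ((i : ℕ) + 1) = 0 by simp [ve, h]]
    rw [show ve b (S1 b *ᵥ v) (i : ℕ) = (S1 b *ᵥ v) i by
      simpa using (ve_coe (S1 b *ᵥ v) i)]
    rw [S1_mulVec, hib, sub_zero]

lemma not_isUnit_iff (X : Matrix (Fin b) (Fin b) ℂ) (r : ℂ) :
    ¬ IsUnit (X - r • (1 : Matrix (Fin b) (Fin b) ℂ)) ↔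
      ∃ v : Fin b → ℂ, v ≠ 0 ∧ X *ᵥ v = r • v := by
  rw [Matrix.isUnit_iff_isUnit_det, isUnit_iff_ne_zero, not_not,
      ← Matrix.exists_mulVec_eq_zero_iff]
  constructor
  · rintro ⟨v, hv, h0⟩
    refine ⟨v, hv, ?_⟩
    rwa [sub_mulVec, smul_mulVec, one_mulVec, sub_eq_zero] at h0
  · rintro ⟨v, hv, h0⟩
    exact ⟨v, hv, by rw [sub_mulVec, smul_mulVec, one_mulVec, h0, sub_self]⟩

lemma key_U1 (hb : 2 ≤ b) (r : ℂ) :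
    ¬ IsUnit (S1 b * (M1 b)ᵀ - r • (1 : Matrix (Fin b) (Fin b) ℂ)) ↔
      ∑ i ∈ Finset.range (b + 1), (-r) ^ i = 0 := by
  have hb0 : 0 < b := by omega
  rw [not_isUnit_iff]
  constructor
  · rintro ⟨v, hv, heig⟩
    have hj : ∀ j : Fin b, v ⟨0, hb0⟩ - ve b v ((j : ℕ) + 1) = r * v j := by
      intro j
      have h := congrFun heig j
      rw [U1_mulVec hb0] at h
      simpa using h
    have hv0 : v ⟨0, hb0⟩ ≠ 0 := by
      intro h0
      apply hv
      have key : ∀ n, ∀ hn : n < b, v ⟨n, hn⟩ = 0 := by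
        intro n
        induction n with
        | zero => intro hn; exact h0
        | succ m ih =>
          intro hn
          have hm : m < b := by omega
          have h := hj ⟨m, hm⟩
          simp only [h0, ih hm, mul_zero, zero_sub, neg_eq_zero] at h
          rwa [show ve b v (m + 1) = v ⟨m + 1, hn⟩ from by simp [ve, hn]] at h
      funext j
      exact key j j.isLt
    have hval : ∀ n, ∀ hn : n < b, v ⟨n, hn⟩
        = v ⟨0, hb0⟩ * ∑ k ∈ Finset.range (n + 1), (-r) ^ k := by
      intro n
      induction n with
      | zero => intro hn; simp
      | succ m ih =>
        intro hn
        have hm : m < b := by omega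
        have h1 := hj ⟨m, hm⟩
        rw [show ve b v (m + 1) = v ⟨m + 1, hn⟩ from by simp [ve, hn], ih hm] at h1
        have h2 : v ⟨m + 1, hn⟩
            = v ⟨0, hb0⟩ - r * (v ⟨0, hb0⟩ * ∑ k ∈ Finset.range (m + 1), (-r) ^ k) := by
          linear_combination -h1
        rw [h2]
        conv_rhs => rw [geom_sum_succ]
        ring
    have hlast := hj ⟨b - 1, by omega⟩
    rw [show ((⟨b - 1, by omega⟩ : Fin b) : ℕ) + 1 = b from by simp; omega] at hlast
    rw [show ve b v b = 0 from by simp [ve], hval (b - 1) (by omega)] at hlast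
    rw [show b - 1 + 1 = b from by omega] at hlast
    have hrs : r * ∑ k ∈ Finset.range b, (-r) ^ k = 1 := by
      have h2 : v ⟨0, hb0⟩ * (1 - r * ∑ k ∈ Finset.range b, (-r) ^ k) = 0 := by
        linear_combination hlast
      rcases mul_eq_zero.1 h2 with h | h
      · exact absurd h hv0
      · linear_combination -h
    rw [geom_sum_succ]
    linear_combination -hrs
  · intro hs
    refine ⟨fun j => ∑ k ∈ Finset.range ((j : ℕ) + 1), (-r) ^ k, ?_, ?_⟩
    · intro h0
      have := congrFun h0 ⟨0, hb0⟩
      simp at this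
    · funext j
      rw [U1_mulVec hb0]
      simp only [Pi.smul_apply, smul_eq_mul]
      by_cases h : (j : ℕ) + 1 < b
      · rw [show ve b (fun j : Fin b => ∑ k ∈ Finset.range ((j : ℕ) + 1), (-r) ^ k) ((j : ℕ) + 1)
            = ∑ k ∈ Finset.range ((j : ℕ) + 1 + 1), (-r) ^ k from by simp [ve, h]]
        rw [geom_sum_succ (x := -r) (n := (j : ℕ) + 1)]
        simp only [zero_add, Finset.sum_range_one, pow_zero]
        ring
      · have hjb : (j : ℕ) + 1 = b := by have := j.isLt; omega
        rw [show ve b (fun j : Fin b => ∑ k ∈ Finset.range ((j : ℕ) + 1), (-r) ^ k) ((j : ℕ) + 1)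
            = 0 from by simp [ve, hjb]]
        rw [geom_sum_succ] at hs
        rw [hjb]
        simp only [zero_add, Finset.sum_range_one, pow_zero]
        linear_combination hs

lemma key_V1 (hb : 2 ≤ b) (r : ℂ) :
    ¬ IsUnit ((M1 b)ᵀ * S1 b - r • (1 : Matrix (Fin b) (Fin b) ℂ)) ↔
      ∑ i ∈ Finset.range (b + 1), (-r) ^ i = 0 := by
  have hb0 : 0 < b := by omega
  rw [not_isUnit_iff]
  constructor
  · rintro ⟨v, hv, heig⟩
    have hj : ∀ j : Fin b,
        (if h : (j : ℕ) + 1 < b then -(v ⟨(j : ℕ) + 1, h⟩)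
          else ∑ n ∈ Finset.range b, ve b v n) = r * v j := by
      intro j
      have h := congrFun heig j
      rw [V1_mulVec] at h
      simpa using h
    have hval : ∀ n, ∀ hn : n < b, v ⟨n, hn⟩ = v ⟨0, hb0⟩ * (-r) ^ n := by
      intro n
      induction n with
      | zero => intro hn; simp
      | succ m ih =>
        intro hn
        have hm : m < b := by omega
        have h1 := hj ⟨m, hm⟩
        rw [dif_pos (show (m : ℕ) + 1 < b from hn)] at h1
        rw [ih hm] at h1
        rw [pow_succ]
        linear_combination -h1
    have hv0 : v ⟨0, hb0⟩ ≠ 0 := by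
      intro h0
      apply hv
      funext j
      have := hval j j.isLt
      simp only [h0, zero_mul] at this
      simpa using this
    have hlast := hj ⟨b - 1, by omega⟩
    have hnb : ¬ (((⟨b - 1, by omega⟩ : Fin b) : ℕ) + 1 < b) := by simp; omega
    rw [dif_neg hnb] at hlast
    have hsum : ∑ n ∈ Finset.range b, ve b v n
        = v ⟨0, hb0⟩ * ∑ n ∈ Finset.range b, (-r) ^ n := by
      rw [Finset.mul_sum]
      apply Finset.sum_congr rfl
      intro n hn
      have hnb2 : n < b := Finset.mem_range.1 hn
      rw [show ve b v n = v ⟨n, hnb2⟩ from by simp [ve, hnb2], hval n hnb2]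
    rw [hsum, hval (b - 1) (by omega)] at hlast
    have hb1 : b - 1 + 1 = b := by omega
    rw [geom_sum_succ']
    have h2 : v ⟨0, hb0⟩ * ((-r) ^ b + ∑ n ∈ Finset.range b, (-r) ^ n) = 0 := by
      have : (-r) ^ b = -(r * (-r) ^ (b - 1)) := by
        conv_lhs => rw [← hb1]
        rw [pow_succ]; ring
      rw [this]
      linear_combination hlast
    rcases mul_eq_zero.1 h2 with h | h
    · exact absurd h hv0
    · exact h
  · intro hs
    refine ⟨fun j => (-r) ^ (j : ℕ), ?_, ?_⟩
    · intro h0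
      have := congrFun h0 ⟨0, hb0⟩
      simp at this
    · funext j
      rw [V1_mulVec]
      simp only [Pi.smul_apply, smul_eq_mul]
      by_cases h : (j : ℕ) + 1 < b
      · rw [dif_pos h]
        rw [pow_succ]
        ring
      · rw [dif_neg h]
        have hjb : (j : ℕ) + 1 = b := by have := j.isLt; omega
        have hsum : ∑ n ∈ Finset.range b, ve b (fun j : Fin b => (-r) ^ (j : ℕ)) n
            = ∑ n ∈ Finset.range b, (-r) ^ n := by
          apply Finset.sum_congr rfl
          intro n hn
          have hnb2 : n < b := Finset.mem_range.1 hn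
          simp [ve, hnb2]
        rw [hsum]
        rw [geom_sum_succ'] at hs
        have : (-r) ^ b = -(r * (-r) ^ ((j : ℕ))) := by
          conv_lhs => rw [← hjb]
          rw [pow_succ]; ring
        rw [this] at hs
        linear_combination hs

end EigAux

/-- Let `T_1 = M_1ᵀ`, `U_1 = S_1 T_1` and `V_1 = T_1 S_1`. The set of eigenvalues of `U_1`
(scalars `r` with `U_1 - r·I` singular) and the set of eigenvalues of `V_1` are both equal to
the set of complex roots of `-1 + r - r² + ⋯ + (-1)^{b+1} r^b = 0`. -/
theorem eigenvalues_U1_V1 (b : ℕ) (hb : 2 ≤ b) :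
    ({r : ℂ | ¬IsUnit (S1 b * (M1 b)ᵀ - r • (1 : Matrix (Fin b) (Fin b) ℂ))} =
        {r : ℂ | ∑ i ∈ Finset.range (b + 1), (-1 : ℂ) ^ (i + 1) * r ^ i = 0}) ∧
      {r : ℂ | ¬IsUnit ((M1 b)ᵀ * S1 b - r • (1 : Matrix (Fin b) (Fin b) ℂ))} =
        {r : ℂ | ∑ i ∈ Finset.range (b + 1), (-1 : ℂ) ^ (i + 1) * r ^ i = 0} := by
  have hq : ∀ r : ℂ,
      (∑ i ∈ Finset.range (b + 1), (-1 : ℂ) ^ (i + 1) * r ^ i = 0) ↔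
        (∑ i ∈ Finset.range (b + 1), (-r) ^ i = 0) := by
    intro r
    have h : ∀ i ∈ Finset.range (b + 1), (-1 : ℂ) ^ (i + 1) * r ^ i = -((-r) ^ i) := by
      intro i _
      rw [pow_succ, neg_pow]
      ring
    rw [Finset.sum_congr rfl h, Finset.sum_neg_distrib, neg_eq_zero]
  constructor
  · ext r
    simp only [Set.mem_setOf_eq, hq r]
    exact EigAux.key_U1 hb r
  · ext r
    simp only [Set.mem_setOf_eq, hq r]
    exact EigAux.key_V1 hb r
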